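/- Let p : ℝ³ → ℝ be a polynomial function and q : ℝ³ → ℝ³ a vector field with polynomial components. If ∇×q = 𝔭p as functions on ℝ³, then p = 0 (identically). In particular, for any r and s the sum ∇×𝐏_r + 𝔭(P_s) of subspaces of vector fields on ℝ³ is direct. -/

import Mathlib

open MeasureTheory

/-- Divergence of a vector field on ℝ³. -/
noncomputable def pdiv (v : (Fin 3 → ℝ) → (Fin 3 → ℝ)) (x : Fin 3 → ℝ) : ℝ :=
  ∑ i : Fin 3, fderiv ℝ (fun y => v y i) x (Pi.single i 1)

/-- Curl of a vector field on ℝ³. -/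
noncomputable def pcurl (v : (Fin 3 → ℝ) → (Fin 3 → ℝ)) (x : Fin 3 → ℝ) : Fin 3 → ℝ :=
  ![fderiv ℝ (fun y => v y 2) x (Pi.single 1 1) - fderiv ℝ (fun y => v y 1) x (Pi.single 2 1),
    fderiv ℝ (fun y => v y 0) x (Pi.single 2 1) - fderiv ℝ (fun y => v y 2) x (Pi.single 0 1),
    fderiv ℝ (fun y => v y 1) x (Pi.single 0 1) - fderiv ℝ (fun y => v y 0) x (Pi.single 1 1)]

/-- Gradient of a scalar field on ℝ³. -/
noncomputable def pgrad (p : (Fin 3 → ℝ) → ℝ) (x : Fin 3 → ℝ) : Fin 3 → ℝ :=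
  fun i => fderiv ℝ p x (Pi.single i 1)

/-- The Poincaré-type operator 𝔭: (𝔭u)(x) = (∫₀¹ t² u(tx) dt) x. -/
noncomputable def poin (u : (Fin 3 → ℝ) → ℝ) (x : Fin 3 → ℝ) : Fin 3 → ℝ :=
  (∫ t in (0:ℝ)..1, t ^ 2 * u (t • x)) • x

/-- `u` is a polynomial function of total degree at most `r` (P_r = {0} if r < 0). -/
def IsPolyDeg (r : ℤ) (u : (Fin 3 → ℝ) → ℝ) : Prop :=
  ∃ p : MvPolynomial (Fin 3) ℝ, (p = 0 ∨ (p.totalDegree : ℤ) ≤ r) ∧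
    ∀ x, MvPolynomial.eval x p = u x

/-- `v` is a vector field with polynomial components of total degree at most `r`. -/
def IsVecPolyDeg (r : ℤ) (v : (Fin 3 → ℝ) → (Fin 3 → ℝ)) : Prop :=
  ∀ i, IsPolyDeg r fun x => v x i

/-- `u` is a polynomial function. -/
def IsPolyFun (u : (Fin 3 → ℝ) → ℝ) : Prop :=
  ∃ p : MvPolynomial (Fin 3) ℝ, ∀ x, MvPolynomial.eval x p = u x

/-- Membership in S_k = {p ∈ (P̃_k)³ : x·p(x) = 0}. -/
def MemS (k : ℕ) (v : (Fin 3 → ℝ) → (Fin 3 → ℝ)) : Prop :=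
  (∀ i, ∃ p : MvPolynomial (Fin 3) ℝ, p.IsHomogeneous k ∧ ∀ x, MvPolynomial.eval x p = v x i) ∧
    ∀ x, ∑ i : Fin 3, x i * v x i = 0

/-- Membership in the first-family Nédélec space R_k = 𝐏_{k-1} ⊕ S_k. -/
def MemR (k : ℕ) (v : (Fin 3 → ℝ) → (Fin 3 → ℝ)) : Prop :=
  ∃ v₁ v₂, IsVecPolyDeg ((k : ℤ) - 1) v₁ ∧ MemS k v₂ ∧ v = v₁ + v₂


section AuxLemmas
open MvPolynomial


lemma aux_pderiv_comm (i j : Fin 3) (p : MvPolynomial (Fin 3) ℝ) :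
    pderiv i (pderiv j p) = pderiv j (pderiv i p) := by
  induction p using MvPolynomial.induction_on' with
  | add p q hp hq => simp [hp, hq]
  | monomial s a =>
    rcases eq_or_ne i j with rfl | hij
    · rfl
    · simp only [pderiv_monomial]
      rw [tsub_right_comm]
      congr 1
      simp only [Finsupp.tsub_apply, Finsupp.tsub_apply, Finsupp.single_apply, Finsupp.single_apply,
        if_neg (Ne.symm hij), if_neg hij, Nat.sub_zero]
      ring

lemma aux_degree_sum (d : Fin 3 →₀ ℕ) : ∑ i : Fin 3, d i = d.degree :=
  (Finset.sum_subset (Finset.subset_univ _)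
    (fun x _ hx => Finsupp.notMem_support_iff.mp hx)).symm

lemma aux_X_mul_pderiv_monomial (i : Fin 3) (d : Fin 3 →₀ ℕ) (a : ℝ) :
    X i * pderiv i (monomial d a) = monomial d (a * d i) := by
  rw [pderiv_monomial, X, monomial_mul, one_mul]
  rcases Nat.eq_zero_or_pos (d i) with h | h
  · simp [h]
  · have hs : Finsupp.single i 1 + (d - Finsupp.single i 1) = d := by
      ext j
      rcases eq_or_ne j i with rfl | hj
      · simp only [Finsupp.add_apply, Finsupp.tsub_apply, Finsupp.single_eq_same]
        omega
      · simp [Finsupp.single_apply, if_neg (Ne.symm hj), Finsupp.tsub_apply]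
    rw [hs]

lemma aux_euler {k : ℕ} {p : MvPolynomial (Fin 3) ℝ} (hp : p.IsHomogeneous k) :
    ∑ i : Fin 3, X i * pderiv i p = (k : ℝ) • p := by
  conv_lhs => rw [p.as_sum]
  conv_rhs => rw [p.as_sum]
  simp_rw [map_sum, Finset.mul_sum]
  rw [Finset.smul_sum, Finset.sum_comm]
  refine Finset.sum_congr rfl fun d hd => ?_
  have hdeg : d.degree = k := by
    have := hp (mem_support_iff.mp hd)
    rw [Finsupp.degree_eq_weight_one]; exact this
  simp_rw [aux_X_mul_pderiv_monomial]
  rw [← map_sum, smul_monomial]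
  congr 1
  rw [← Finset.mul_sum, ← Nat.cast_sum, aux_degree_sum, hdeg, smul_eq_mul]
  ring


lemma aux_eval_smul {k : ℕ} {p : MvPolynomial (Fin 3) ℝ} (hp : p.IsHomogeneous k)
    (t : ℝ) (x : Fin 3 → ℝ) : eval (t • x) p = t ^ k * eval x p := by
  conv_lhs => rw [p.as_sum]
  conv_rhs => rw [p.as_sum]
  rw [map_sum, map_sum, Finset.mul_sum]
  refine Finset.sum_congr rfl fun d hd => ?_
  have hdeg : d.degree = k := by
    have := hp (mem_support_iff.mp hd)
    rw [Finsupp.degree_eq_weight_one]; exact this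
  rw [eval_monomial, eval_monomial, Finsupp.prod, Finsupp.prod]
  simp only [Pi.smul_apply, smul_eq_mul, mul_pow]
  rw [Finset.prod_mul_distrib, Finset.prod_pow_eq_pow_sum]
  rw [show ∑ i ∈ d.support, d i = k from hdeg]
  ring

noncomputable def evalDeriv (p : MvPolynomial (Fin 3) ℝ) (x : Fin 3 → ℝ) :
    (Fin 3 → ℝ) →L[ℝ] ℝ :=
  ∑ i : Fin 3, eval x (pderiv i p) • (ContinuousLinearMap.proj i :
    (Fin 3 → ℝ) →L[ℝ] ℝ)

lemma aux_hasFDerivAt_eval (p : MvPolynomial (Fin 3) ℝ) (x : Fin 3 → ℝ) :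
    HasFDerivAt (fun y : Fin 3 → ℝ => eval y p) (evalDeriv p x) x := by
  induction p using MvPolynomial.induction_on with
  | C a =>
    simpa [evalDeriv, pderiv_C] using (hasFDerivAt_const (eval x (C a) : ℝ) x)
  | add p q hp hq =>
    have := hp.add hq
    refine (this.congr_of_eventuallyEq (Filter.Eventually.of_forall fun y => ?_)).congr_fderiv ?_
    · simp
    · ext v; simp [evalDeriv, add_smul, Finset.sum_add_distrib]
  | mul_X p i hp =>
    have hXi : HasFDerivAt (fun y : Fin 3 → ℝ => y i)
        (ContinuousLinearMap.proj i : (Fin 3 → ℝ) →L[ℝ] ℝ) x :=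
      (ContinuousLinearMap.proj i : (Fin 3 → ℝ) →L[ℝ] ℝ).hasFDerivAt
    have := hp.mul hXi
    refine (this.congr_of_eventuallyEq (Filter.Eventually.of_forall fun y => ?_)).congr_fderiv ?_
    · simp
    · ext v
      fin_cases i <;>
        simp [evalDeriv, Fin.sum_univ_three, pderiv_mul] <;> ring

lemma aux_fderiv_eval (p : MvPolynomial (Fin 3) ℝ) (x : Fin 3 → ℝ) (i : Fin 3) :
    fderiv ℝ (fun y : Fin 3 → ℝ => eval y p) x (Pi.single i 1) = eval x (pderiv i p) := by
  rw [(aux_hasFDerivAt_eval p x).fderiv]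
  fin_cases i <;> simp [evalDeriv, Fin.sum_univ_three, Pi.single_apply]

noncomputable def Spoly (P : MvPolynomial (Fin 3) ℝ) : MvPolynomial (Fin 3) ℝ :=
  ∑ k ∈ Finset.range (P.totalDegree + 1),
    C (((k : ℝ) + 3)⁻¹) * homogeneousComponent k P

lemma aux_poin_eval (P : MvPolynomial (Fin 3) ℝ) (x : Fin 3 → ℝ) (i : Fin 3) :
    (∫ t in (0:ℝ)..1, t ^ 2 * eval (t • x) P) * x i = eval x (X i * Spoly P) := by
  have h1 : ∀ t : ℝ, t ^ 2 * eval (t • x) P = ∑ k ∈ Finset.range (P.totalDegree + 1),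
      eval x (homogeneousComponent k P) * t ^ (k + 2) := by
    intro t
    conv_lhs => rw [← P.sum_homogeneousComponent]
    rw [map_sum, Finset.mul_sum]
    refine Finset.sum_congr rfl fun k _ => ?_
    rw [aux_eval_smul (homogeneousComponent_isHomogeneous k P) t x, pow_add]
    ring
  have h2 : (∫ t in (0:ℝ)..1, t ^ 2 * eval (t • x) P)
      = ∑ k ∈ Finset.range (P.totalDegree + 1),
        ((k : ℝ) + 3)⁻¹ * eval x (homogeneousComponent k P) := by
    simp_rw [h1]
    rw [intervalIntegral.integral_finset_sum (fun k _ =>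
      (Continuous.intervalIntegrable (by fun_prop) _ _))]
    refine Finset.sum_congr rfl fun k _ => ?_
    rw [intervalIntegral.integral_const_mul, integral_pow]
    have : ((k : ℝ) + 2 + 1) = (k : ℝ) + 3 := by ring
    rw [one_pow, zero_pow (by omega), sub_zero]
    push_cast
    rw [this]
    field_simp
  rw [h2, eval_mul, eval_X, Spoly, map_sum, Finset.sum_mul, Finset.mul_sum]
  refine Finset.sum_congr rfl fun k _ => ?_
  rw [eval_mul, eval_C]
  ring

lemma aux_sum_pderiv (P : MvPolynomial (Fin 3) ℝ) :
    ∑ i : Fin 3, pderiv i (X i * Spoly P) = P := by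
  have key : ∀ k : ℕ, ∑ i : Fin 3,
      pderiv i (X i * (C (((k : ℝ) + 3)⁻¹) * homogeneousComponent k P))
      = homogeneousComponent k P := by
    intro k
    have h1 : ∀ i : Fin 3,
        pderiv i (X i * (C (((k : ℝ) + 3)⁻¹) * homogeneousComponent k P))
        = C (((k : ℝ) + 3)⁻¹) * homogeneousComponent k P
          + C (((k : ℝ) + 3)⁻¹) * (X i * pderiv i (homogeneousComponent k P)) := by
      intro i
      rw [pderiv_mul, pderiv_X_self, one_mul, pderiv_C_mul]
      ring
    simp_rw [h1]
    rw [Finset.sum_add_distrib, Finset.sum_const, Finset.card_univ, ← Finset.mul_sum,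
      aux_euler (homogeneousComponent_isHomogeneous k P)]
    rw [smul_eq_C_mul, ← mul_assoc, ← C_mul, Fintype.card_fin]
    rw [nsmul_eq_mul, ← C_eq_coe_nat, ← mul_assoc, ← C_mul, ← add_mul, ← C_add]
    have hne : (k : ℝ) + 3 ≠ 0 := by positivity
    rw [show (((3:ℕ):ℝ) * ((k:ℝ)+3)⁻¹ + ((k:ℝ)+3)⁻¹ * (k:ℝ)) = 1 by push_cast; field_simp; ring]
    rw [C_1, one_mul]
  calc ∑ i : Fin 3, pderiv i (X i * Spoly P)
      = ∑ k ∈ Finset.range (P.totalDegree + 1), ∑ i : Fin 3,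
          pderiv i (X i * (C (((k : ℝ) + 3)⁻¹) * homogeneousComponent k P)) := by
        rw [Spoly]
        simp_rw [Finset.mul_sum, map_sum]
        exact Finset.sum_comm
    _ = ∑ k ∈ Finset.range (P.totalDegree + 1), homogeneousComponent k P :=
        Finset.sum_congr rfl fun k _ => key k
    _ = P := P.sum_homogeneousComponent

end AuxLemmas

open MvPolynomial in
lemma aux_main (p : (Fin 3 → ℝ) → ℝ) (q : (Fin 3 → ℝ) → (Fin 3 → ℝ))
    (hp : IsPolyFun p) (hq : ∀ i, IsPolyFun fun x => q x i)
    (h : ∀ x, pcurl q x = poin p x) : ∀ x, p x = 0 := by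
  obtain ⟨P, hP⟩ := hp
  choose Q hQ using hq
  have hqf : ∀ i, (fun y => q y i) = fun y => eval y (Q i) :=
    fun i => funext fun y => (hQ i y).symm
  have hpoin : ∀ x (i : Fin 3), poin p x i = eval x (X i * Spoly P) := by
    intro x i
    have : poin p x i = (∫ t in (0:ℝ)..1, t ^ 2 * eval (t • x) P) * x i := by
      simp only [poin, Pi.smul_apply, smul_eq_mul]
      congr 1
      refine intervalIntegral.integral_congr fun t _ => ?_
      rw [hP]
    rw [this, aux_poin_eval]
  have h0 : pderiv 1 (Q 2) - pderiv 2 (Q 1) = X 0 * Spoly P := by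
    refine MvPolynomial.funext fun x => ?_
    have hx := congrFun (h x) 0
    simp only [pcurl, Matrix.cons_val_zero] at hx
    rw [hqf 2, hqf 1, aux_fderiv_eval, aux_fderiv_eval] at hx
    rw [map_sub, hx, hpoin x 0]
  have h1 : pderiv 2 (Q 0) - pderiv 0 (Q 2) = X 1 * Spoly P := by
    refine MvPolynomial.funext fun x => ?_
    have hx := congrFun (h x) 1
    simp only [pcurl, Matrix.cons_val_one, Matrix.head_cons, Matrix.cons_val_zero] at hx
    rw [hqf 0, hqf 2, aux_fderiv_eval, aux_fderiv_eval] at hx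
    rw [map_sub, hx, hpoin x 1]
  have h2 : pderiv 0 (Q 1) - pderiv 1 (Q 0) = X 2 * Spoly P := by
    refine MvPolynomial.funext fun x => ?_
    have hx := congrFun (h x) 2
    simp only [pcurl, Matrix.cons_val_two, Matrix.tail_cons, Matrix.head_cons] at hx
    rw [hqf 1, hqf 0, aux_fderiv_eval, aux_fderiv_eval] at hx
    rw [map_sub, hx, hpoin x 2]
  have hP0 : P = 0 := by
    have hz : ∑ i : Fin 3, pderiv i (X i * Spoly P) = 0 := by
      rw [Fin.sum_univ_three, ← h0, ← h1, ← h2]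
      simp only [map_sub]
      rw [aux_pderiv_comm 0 1 (Q 2), aux_pderiv_comm 0 2 (Q 1), aux_pderiv_comm 1 2 (Q 0)]
      ring
    rw [← aux_sum_pderiv P, hz]
  intro x
  rw [← hP x, hP0, map_zero]

/-- if ∇×q = 𝔭p for polynomial p, q then p = 0; in particular
    ∇×𝐏_r + 𝔭(P_s) is a direct sum. -/
theorem stmt_3 :
    (∀ (p : (Fin 3 → ℝ) → ℝ) (q : (Fin 3 → ℝ) → (Fin 3 → ℝ)),
      IsPolyFun p → (∀ i, IsPolyFun fun x => q x i) →
      (∀ x, pcurl q x = poin p x) → ∀ x, p x = 0) ∧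
    ∀ (r s : ℤ) (q : (Fin 3 → ℝ) → (Fin 3 → ℝ)) (p : (Fin 3 → ℝ) → ℝ),
      IsVecPolyDeg r q → IsPolyDeg s p → (∀ x, pcurl q x = poin p x) →
      ∀ x, pcurl q x = 0 ∧ poin p x = 0 := by
  constructor
  · exact aux_main
  · intro r s q p hq hp h
    have hpz : ∀ x, p x = 0 := by
      refine aux_main p q ⟨hp.choose, hp.choose_spec.2⟩ (fun i => ⟨(hq i).choose, ((hq i).choose_spec).2⟩) h
    have hpoinz : ∀ x, poin p x = 0 := by
      intro x
      have : (∫ t in (0:ℝ)..1, t ^ 2 * p (t • x)) = 0 := by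
        simp [hpz]
      rw [poin, this, zero_smul]
    exact fun x => ⟨(h x).trans (hpoinz x), hpoinz x⟩
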